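/- arXiv:1612.02622 — 2 statements merged into one kernel-verified Lean document; each statement's English description precedes it below -/
import Mathlib

section
/- For x ≥ 1, the number of Gaussian integers n with |n| ≤ x equals πx² + O(x); that is, there is an absolute constant C such that |#{n ∈ ℤ[i] : |n| ≤ x} − πx²| ≤ Cx for all x ≥ 1. -/
open Real Complex MeasureTheory
open scoped ENNReal NNReal

noncomputable section

/-- the unit square anchored at a Gaussian integer -/
def gsq (n : GaussianInt) : Set ℂ :=
  Complex.measurableEquivRealProd ⁻¹'
    (Set.Ico ((n.re : ℝ)) ((n.re : ℝ) + 1) ×ˢ Set.Ico ((n.im : ℝ)) ((n.im : ℝ) + 1))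

lemma mem_gsq {n : GaussianInt} {z : ℂ} :
    z ∈ gsq n ↔ ((n.re : ℝ) ≤ z.re ∧ z.re < (n.re : ℝ) + 1) ∧
      ((n.im : ℝ) ≤ z.im ∧ z.im < (n.im : ℝ) + 1) := by
  simp [gsq, Complex.measurableEquivRealProd_apply, Set.mem_Ico]

lemma volume_gsq (n : GaussianInt) : volume (gsq n) = 1 := by
  rw [gsq, MeasurePreserving.measure_preimage Complex.volume_preserving_equiv_real_prod
    (((measurableSet_Ico).prod (measurableSet_Ico)).nullMeasurableSet)]
  rw [MeasureTheory.Measure.volume_eq_prod, MeasureTheory.Measure.prod_prod,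
    Real.volume_Ico, Real.volume_Ico]
  simp

lemma gsq_eq_of_mem {m n : GaussianInt} {z : ℂ} (hm : z ∈ gsq m) (hn : z ∈ gsq n) : m = n := by
  rw [mem_gsq] at hm hn
  have h1 : m.re = n.re := by
    have a1 : ⌊z.re⌋ = m.re := Int.floor_eq_iff.2 ⟨hm.1.1, by push_cast; exact hm.1.2⟩
    have a2 : ⌊z.re⌋ = n.re := Int.floor_eq_iff.2 ⟨hn.1.1, by push_cast; exact hn.1.2⟩
    rw [← a1, ← a2]
  have h2 : m.im = n.im := by
    have a1 : ⌊z.im⌋ = m.im := Int.floor_eq_iff.2 ⟨hm.2.1, by push_cast; exact hm.2.2⟩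
    have a2 : ⌊z.im⌋ = n.im := Int.floor_eq_iff.2 ⟨hn.2.1, by push_cast; exact hn.2.2⟩
    rw [← a1, ← a2]
  exact Zsqrtd.ext h1 h2

lemma abs_sub_le_of_mem_gsq {n : GaussianInt} {z : ℂ} (hz : z ∈ gsq n) :
    ‖z - GaussianInt.toComplex n‖ ≤ 2 := by
  rw [mem_gsq] at hz
  have hre : (GaussianInt.toComplex n).re = (n.re : ℝ) := (GaussianInt.intCast_re n).symm
  have him : (GaussianInt.toComplex n).im = (n.im : ℝ) := (GaussianInt.intCast_im n).symm
  calc ‖z - GaussianInt.toComplex n‖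
      ≤ |(z - GaussianInt.toComplex n).re| + |(z - GaussianInt.toComplex n).im| :=
        Complex.norm_le_abs_re_add_abs_im _
    _ ≤ 1 + 1 := by
        apply add_le_add
        · rw [Complex.sub_re, hre, abs_le]
          constructor <;> [linarith [hz.1.1, hz.1.2]; linarith [hz.1.1, hz.1.2]]
        · rw [Complex.sub_im, him, abs_le]
          constructor <;> [linarith [hz.2.1, hz.2.2]; linarith [hz.2.1, hz.2.2]]
    _ = 2 := by norm_num

lemma finite_gset (x : ℝ) :
    {n : GaussianInt | ‖GaussianInt.toComplex n‖ ≤ x}.Finite := by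
  apply Set.Finite.subset
    (Set.Finite.preimage (f := fun n : GaussianInt => (n.re, n.im))
      (fun a _ b _ h => Zsqrtd.ext (congrArg Prod.fst h) (congrArg Prod.snd h))
      ((Set.finite_Icc (-⌈x⌉) ⌈x⌉).prod (Set.finite_Icc (-⌈x⌉) ⌈x⌉)))
  intro n hn
  simp only [Set.mem_setOf_eq] at hn
  have hre : |(n.re : ℝ)| ≤ x := by
    have := Complex.abs_re_le_norm (GaussianInt.toComplex n)
    rw [← GaussianInt.intCast_re] at this
    linarith
  have him : |(n.im : ℝ)| ≤ x := by
    have := Complex.abs_im_le_norm (GaussianInt.toComplex n)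
    rw [← GaussianInt.intCast_im] at this
    linarith
  have hx : x ≤ (⌈x⌉ : ℝ) := Int.le_ceil x
  rw [abs_le] at hre him
  have c1 : ((-⌈x⌉ : ℤ) : ℝ) ≤ (n.re : ℝ) := by push_cast; linarith [hre.1]
  have c2 : ((n.re : ℤ) : ℝ) ≤ ((⌈x⌉ : ℤ) : ℝ) := by linarith [hre.2]
  have c3 : ((-⌈x⌉ : ℤ) : ℝ) ≤ (n.im : ℝ) := by push_cast; linarith [him.1]
  have c4 : ((n.im : ℤ) : ℝ) ≤ ((⌈x⌉ : ℤ) : ℝ) := by linarith [him.2]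
  exact ⟨⟨by exact_mod_cast c1, by exact_mod_cast c2⟩,
    ⟨by exact_mod_cast c3, by exact_mod_cast c4⟩⟩

theorem stmt_6 :
    ∃ C : ℝ, 0 < C ∧ ∀ x : ℝ, 1 ≤ x →
      |(Nat.card {n : GaussianInt // ‖GaussianInt.toComplex n‖ ≤ x} : ℝ)
        - π * x ^ 2| ≤ C * x := by
  refine ⟨26, by norm_num, fun x hx => ?_⟩
  have h2x : (0:ℝ) ≤ x + 2 := by linarith
  set S : Set GaussianInt := {n : GaussianInt | ‖GaussianInt.toComplex n‖ ≤ x}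
  have hfin : S.Finite := finite_gset x
  set T : Finset GaussianInt := hfin.toFinset with hT
  -- the union of squares
  set U : Set ℂ := ⋃ n ∈ T, gsq n with hU
  have hdisj : (T : Set GaussianInt).PairwiseDisjoint gsq := by
    intro a _ b _ hab
    exact Set.disjoint_left.2 fun z hz hz' => hab (gsq_eq_of_mem hz hz')
  have hmeas : ∀ n ∈ T, MeasurableSet (gsq n) := fun n _ =>
    Complex.measurableEquivRealProd.measurable ((measurableSet_Ico).prod (measurableSet_Ico))
  have hUvol : volume U = (T.card : ℝ≥0∞) := by
    rw [hU, measure_biUnion_finset hdisj hmeas]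
    simp [volume_gsq]
  -- card identification
  have hcard : (Nat.card {n : GaussianInt // ‖GaussianInt.toComplex n‖ ≤ x}) =
      T.card :=
    (Nat.card_coe_set_eq S).trans (Set.ncard_eq_toFinset_card S hfin)
  -- upper inclusion
  have hsub1 : U ⊆ Metric.closedBall (0:ℂ) (x + 2) := by
    intro z hz
    rw [hU, Set.mem_iUnion₂] at hz
    obtain ⟨n, hn, hzn⟩ := hz
    have hnS : ‖GaussianInt.toComplex n‖ ≤ x := by
      rw [hT, Set.Finite.mem_toFinset] at hn; exact hn
    rw [Metric.mem_closedBall, Complex.dist_eq, sub_zero]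
    calc ‖z‖ = ‖GaussianInt.toComplex n + (z - GaussianInt.toComplex n)‖ :=
          by ring_nf
      _ ≤ ‖GaussianInt.toComplex n‖ + ‖z - GaussianInt.toComplex n‖ :=
          norm_add_le _ _
      _ ≤ x + 2 := add_le_add hnS (abs_sub_le_of_mem_gsq hzn)
  -- lower inclusion
  have hsub2 : Metric.closedBall (0:ℂ) (x - 2) ⊆ U := by
    intro z hz
    rw [Metric.mem_closedBall, Complex.dist_eq, sub_zero] at hz
    set n : GaussianInt := ⟨⌊z.re⌋, ⌊z.im⌋⟩ with hn
    have hzn : z ∈ gsq n := by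
      rw [mem_gsq]
      exact ⟨⟨Int.floor_le _, by push_cast; exact Int.lt_floor_add_one _⟩,
        ⟨Int.floor_le _, by push_cast; exact Int.lt_floor_add_one _⟩⟩
    have hnx : ‖GaussianInt.toComplex n‖ ≤ x := by
      calc ‖GaussianInt.toComplex n‖
          = ‖z - (z - GaussianInt.toComplex n)‖ := by ring_nf
        _ ≤ ‖z‖ + ‖z - GaussianInt.toComplex n‖ := by
            simpa using norm_sub_le z (z - GaussianInt.toComplex n)
        _ ≤ (x - 2) + 2 := add_le_add hz (abs_sub_le_of_mem_gsq hzn)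
        _ = x := by ring
    rw [hU, Set.mem_iUnion₂]
    exact ⟨n, by rw [hT, Set.Finite.mem_toFinset]; exact hnx, hzn⟩
  -- volume comparisons
  have hup : volume U ≤ ENNReal.ofReal ((x + 2) ^ 2 * π) := by
    calc volume U ≤ volume (Metric.closedBall (0:ℂ) (x + 2)) := measure_mono hsub1
      _ = ENNReal.ofReal ((x + 2) ^ 2 * π) := by
          rw [Complex.volume_closedBall, ENNReal.ofReal_mul (by positivity),
            ← ENNReal.ofReal_pow h2x, ← NNReal.coe_real_pi, ENNReal.ofReal_coe_nnreal]
  have hmax : ENNReal.ofReal (x - 2) = ENNReal.ofReal (max (x - 2) 0) := by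
    rcases le_total (x - 2) 0 with h | h
    · rw [ENNReal.ofReal_eq_zero.2 h, ENNReal.ofReal_eq_zero.2 (le_of_eq (max_eq_right h))]
    · rw [max_eq_left h]
  have hlo : ENNReal.ofReal (max (x - 2) 0 ^ 2 * π) ≤ volume U := by
    calc ENNReal.ofReal (max (x - 2) 0 ^ 2 * π)
        = volume (Metric.closedBall (0:ℂ) (x - 2)) := by
          rw [Complex.volume_closedBall, ENNReal.ofReal_mul (by positivity),
            ENNReal.ofReal_pow (le_max_right _ _), ← hmax, ← NNReal.coe_real_pi,
            ENNReal.ofReal_coe_nnreal]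
      _ ≤ volume U := measure_mono hsub2
  -- pass to real numbers
  have hupR : (T.card : ℝ) ≤ (x + 2) ^ 2 * π := by
    have h := hUvol ▸ hup
    have := ENNReal.toReal_mono (by exact ENNReal.ofReal_ne_top) h
    rwa [ENNReal.toReal_natCast, ENNReal.toReal_ofReal (by positivity)] at this
  have hloR : max (x - 2) 0 ^ 2 * π ≤ (T.card : ℝ) := by
    have h := hUvol ▸ hlo
    have := ENNReal.toReal_mono (by exact ENNReal.natCast_ne_top _) h
    rwa [ENNReal.toReal_natCast, ENNReal.toReal_ofReal (by positivity)] at this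
  rw [hcard, abs_le]
  have hNpos : (0:ℝ) ≤ (T.card : ℝ) := Nat.cast_nonneg _
  have hpi : π < 3.15 := Real.pi_lt_d2
  have hpi0 : 0 < π := Real.pi_pos
  constructor
  · rcases le_total x 2 with h | h
    · have hm : max (x - 2) 0 = 0 := max_eq_right (by linarith)
      nlinarith
    · have hm : max (x - 2) 0 = x - 2 := max_eq_left (by linarith)
      rw [hm] at hloR
      nlinarith
  · nlinarith

end
end

section
/- Let κ ∈ ℂ and 0 < x̃ < x. Then |∑_{n ∈ ℤ[i], x̃ < |n| ≤ x} e(Im(nκ))| ≪ x · min(‖Im(κ)‖_ℝ^{−1}, x)^{1/2} · min(‖Re(κ)‖_ℝ^{−1}, x)^{1/2}, with an absolute implied constant. -/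
open Real Complex

/-- Distance from a real number to the nearest integer. -/
noncomputable def distNearestInt (x : ℝ) : ℝ := ⨅ m : ℤ, |x - (m : ℝ)|

/-- `min(‖y‖_ℝ^{-1}, x)`, with the convention that the value is `x` when `‖y‖_ℝ = 0`. -/
noncomputable def minInvDist (y x : ℝ) : ℝ :=
  if distNearestInt y = 0 then x else min (distNearestInt y)⁻¹ x

lemma distNearestInt_eq (x : ℝ) : distNearestInt x = |x - round x| := by
  refine le_antisymm (ciInf_le ⟨0, ?_⟩ (round x)) (le_ciInf fun m => round_le x m)
  rintro y ⟨m, rfl⟩; positivity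

lemma distNearestInt_nonneg (x : ℝ) : 0 ≤ distNearestInt x := by
  rw [distNearestInt_eq]; positivity

lemma distNearestInt_le_half (x : ℝ) : distNearestInt x ≤ 1 / 2 := by
  rw [distNearestInt_eq]; exact abs_sub_round x

lemma minInvDist_nonneg (y x : ℝ) (hx : 0 ≤ x) : 0 ≤ minInvDist y x := by
  unfold minInvDist; split
  · exact hx
  · exact le_min (inv_nonneg.2 (distNearestInt_nonneg y)) hx

lemma min_le_sqrt_mul_sqrt {a b : ℝ} (ha : 0 ≤ a) (hb : 0 ≤ b) :
    min a b ≤ Real.sqrt a * Real.sqrt b := by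
  rcases le_total a b with h | h
  · calc min a b = a := min_eq_left h
    _ = Real.sqrt a * Real.sqrt a := (Real.mul_self_sqrt ha).symm
    _ ≤ Real.sqrt a * Real.sqrt b := by
        exact mul_le_mul_of_nonneg_left (Real.sqrt_le_sqrt h) (Real.sqrt_nonneg a)
  · calc min a b = b := min_eq_right h
    _ = Real.sqrt b * Real.sqrt b := (Real.mul_self_sqrt hb).symm
    _ ≤ Real.sqrt a * Real.sqrt b := by
        exact mul_le_mul_of_nonneg_right (Real.sqrt_le_sqrt h) (Real.sqrt_nonneg b)

-- sin lower bound
lemma two_mul_dist_le_abs_sin (u : ℝ) : 2 * distNearestInt u ≤ |Real.sin (π * u)| := by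
  rw [distNearestInt_eq]
  set r := u - round u with hr
  have h1 : |r| ≤ 1 / 2 := abs_sub_round u
  have h2 : π * u = π * r + (round u : ℤ) * π := by push_cast; ring
  have habs1 : |((-1:ℝ)) ^ round u| = 1 := by
    rcases Int.even_or_odd (round u) with h | h
    · rw [h.neg_one_zpow]; simp
    · rw [h.neg_one_zpow]; simp
  rw [h2, Real.sin_add_int_mul_pi, abs_mul, habs1, one_mul]
  have hsnn : 0 ≤ Real.sin (π * |r|) := by
    apply Real.sin_nonneg_of_nonneg_of_le_pi
    · positivity
    · nlinarith [Real.pi_pos, abs_nonneg r]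
  have h3 : |Real.sin (π * r)| = Real.sin (π * |r|) := by
    rcases le_or_gt 0 r with h | h
    · rw [_root_.abs_of_nonneg h] at hsnn ⊢
      exact _root_.abs_of_nonneg hsnn
    · rw [_root_.abs_of_neg h] at hsnn ⊢
      rw [mul_neg, Real.sin_neg] at hsnn
      rw [show Real.sin (π * -r) = -Real.sin (π * r) by rw [mul_neg, Real.sin_neg]]
      exact _root_.abs_of_nonpos (by linarith)
  rw [h3]
  have h4 := Real.mul_le_sin (x := π * |r|) (by positivity) (by nlinarith [Real.pi_pos])
  have hπ := Real.pi_pos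
  calc 2 * |r| = 2 / π * (π * |r|) := by field_simp
  _ ≤ Real.sin (π * |r|) := h4

lemma Icc_succ_right' (m n : ℤ) (h : m ≤ n + 1) :
    Finset.Icc m (n + 1) = insert (n + 1) (Finset.Icc m n) := by
  ext b; simp only [Finset.mem_Icc, Finset.mem_insert]; omega

lemma geom_formula (z : ℂ) (hz : z ≠ 0) (m : ℤ) : ∀ n : ℤ, m ≤ n →
    (∑ b ∈ Finset.Icc m n, z ^ b) * (z - 1) = z ^ (n + 1) - z ^ m := by
  refine Int.le_induction ?_ ?_
  · rw [Finset.Icc_self, Finset.sum_singleton, zpow_add_one₀ hz]; ring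
  · intro n hn ih
    rw [Icc_succ_right' m n (by omega), Finset.sum_insert (by simp), add_mul, ih,
      zpow_add_one₀ hz (n+1)]
    ring

lemma norm_one_of_exp (u : ℝ) : ‖Complex.exp (2 * π * Complex.I * u)‖ = 1 := by
  rw [Complex.norm_exp]
  simp [Complex.mul_re]

lemma norm_zpow_exp (u : ℝ) (b : ℤ) :
    ‖Complex.exp (2 * π * Complex.I * u) ^ b‖ = 1 := by
  rw [norm_zpow, norm_one_of_exp, one_zpow]

lemma norm_exp_sub_one (u : ℝ) :
    ‖Complex.exp (2 * π * Complex.I * u) - 1‖ = 2 * |Real.sin (π * u)| := by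
  set w : ℂ := ((π * u : ℝ) : ℂ) with hw
  have e1 : Complex.exp (2 * π * Complex.I * u) = Complex.exp (w * Complex.I) * Complex.exp (w * Complex.I) := by
    rw [← Complex.exp_add]; congr 1; rw [hw]; push_cast; ring
  have e2 : Complex.exp (w * Complex.I) * Complex.exp (-w * Complex.I) = 1 := by
    rw [← Complex.exp_add, show w * Complex.I + -w * Complex.I = 0 by ring, Complex.exp_zero]
  have hI : Complex.I * Complex.I = -1 := Complex.I_mul_I
  have key : Complex.exp (2 * π * Complex.I * u) - 1
      = Complex.exp (w * Complex.I) * (2 * Complex.I * Complex.sin w) := by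
    rw [e1, ← e2, Complex.sin]
    linear_combination (Complex.exp (w * Complex.I) *
      (Complex.exp (w * Complex.I) - Complex.exp (-w * Complex.I))) * hI
  rw [key, norm_mul]
  have h1 : ‖Complex.exp (w * Complex.I)‖ = 1 := by
    rw [Complex.norm_exp]; rw [hw]; simp [Complex.mul_re]
  rw [h1, one_mul, norm_mul, norm_mul, Complex.norm_two, Complex.norm_I, mul_one]
  congr 1
  rw [hw, ← Complex.ofReal_sin, Complex.norm_real, Real.norm_eq_abs]

lemma norm_sum_zpow_le_inv (u : ℝ) (hu : distNearestInt u ≠ 0) (m n : ℤ) :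
    ‖∑ b ∈ Finset.Icc m n, Complex.exp (2 * π * Complex.I * u) ^ b‖
      ≤ (distNearestInt u)⁻¹ := by
  have hδ0 : 0 < distNearestInt u :=
    lt_of_le_of_ne (distNearestInt_nonneg u) (Ne.symm hu)
  set δ := distNearestInt u with hδ
  rcases le_or_gt m n with h | h
  · set z := Complex.exp (2 * π * Complex.I * u) with hz'
    have hz : z ≠ 0 := Complex.exp_ne_zero _
    have hzd : 4 * δ ≤ ‖z - 1‖ := by
      rw [hz', norm_exp_sub_one]
      have := two_mul_dist_le_abs_sin u
      rw [← hδ] at this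
      linarith
    have heq := geom_formula z hz m n h
    have habs : ‖∑ b ∈ Finset.Icc m n, z ^ b‖ * ‖z - 1‖
        = ‖z ^ (n + 1) - z ^ m‖ := by rw [← norm_mul, heq]
    have hb : ‖z ^ (n + 1) - z ^ m‖ ≤ 2 := by
      calc ‖z ^ (n + 1) - z ^ m‖
          ≤ ‖z ^ (n + 1)‖ + ‖z ^ m‖ := by
            simpa using norm_sub_le (z ^ (n+1)) (z ^ m)
      _ ≤ 2 := by rw [hz', norm_zpow_exp, norm_zpow_exp]; norm_num
    have hA : (0:ℝ) ≤ ‖∑ b ∈ Finset.Icc m n, z ^ b‖ :=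
      norm_nonneg _
    rw [inv_eq_one_div, le_div_iff₀ hδ0]
    nlinarith [mul_nonneg hA (by linarith : (0:ℝ) ≤ ‖z - 1‖ - 4 * δ)]
  · rw [Finset.Icc_eq_empty (by omega), Finset.sum_empty, norm_zero]
    positivity

lemma single_bound (u x : ℝ) (hx : 1 ≤ x) (M : ℤ) (hM1 : (1:ℤ) ≤ M) (hM2 : (M:ℝ) ≤ 2*x)
    (s : Finset ℤ) (hs : s ⊆ Finset.Icc (-M) M) (m n : ℤ) (hs' : s = Finset.Icc m n) :
    ‖∑ b ∈ s, Complex.exp (2 * π * Complex.I * u) ^ b‖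
      ≤ 5 * minInvDist u x := by
  have hcard : (s.card : ℝ) ≤ 5 * x := by
    have h1 := Finset.card_le_card hs
    have h2 : (Finset.Icc (-M) M).card = (2 * M + 1).toNat := by
      rw [Int.card_Icc]; congr 1; ring
    have h3 : (s.card : ℝ) ≤ ((2 * M + 1).toNat : ℝ) := by
      exact_mod_cast h1.trans_eq h2
    have h4 : ((2 * M + 1).toNat : ℝ) = 2 * (M : ℝ) + 1 := by
      have h5 : ((2 * M + 1).toNat : ℤ) = 2 * M + 1 := Int.toNat_of_nonneg (by omega)
      exact_mod_cast congrArg (Int.cast : ℤ → ℝ) h5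
    rw [h4] at h3
    linarith
  have hcount : ‖∑ b ∈ s, Complex.exp (2 * π * Complex.I * u) ^ b‖
      ≤ (s.card : ℝ) := by
    calc ‖∑ b ∈ s, Complex.exp (2 * π * Complex.I * u) ^ b‖
        ≤ ∑ b ∈ s, ‖Complex.exp (2 * π * Complex.I * u) ^ b‖ := by
          simpa using
            norm_sum_le s (fun b => Complex.exp (2 * π * Complex.I * u) ^ b)
    _ = (s.card : ℝ) := by
        rw [Finset.sum_congr rfl (fun b _ => norm_zpow_exp u b), Finset.sum_const,
          nsmul_eq_mul, mul_one]
  unfold minInvDist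
  split_ifs with h
  · calc _ ≤ (s.card : ℝ) := hcount
    _ ≤ 5 * x := hcard
  · rcases le_total (distNearestInt u)⁻¹ x with hc | hc
    · rw [min_eq_left hc]
      have := norm_sum_zpow_le_inv u h m n
      rw [← hs'] at this
      have hnn : (0:ℝ) ≤ (distNearestInt u)⁻¹ := inv_nonneg.2 (distNearestInt_nonneg u)
      linarith
    · rw [min_eq_right hc]
      calc _ ≤ (s.card : ℝ) := hcount
      _ ≤ 5 * x := hcard

lemma filter_sq_le (M : ℤ) (c : ℝ) (hM : Real.sqrt c ≤ (M:ℝ))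
    [DecidablePred (fun b : ℤ => ((b:ℝ))^2 ≤ c)] :
    ∃ m n : ℤ, (Finset.Icc (-M) M).filter (fun b : ℤ => ((b:ℝ))^2 ≤ c) = Finset.Icc m n := by
  rcases lt_or_ge c 0 with hc | hc
  · refine ⟨1, 0, ?_⟩
    rw [Finset.Icc_eq_empty (show ¬(1:ℤ) ≤ 0 by omega), Finset.filter_eq_empty_iff]
    intro b _
    nlinarith [sq_nonneg ((b:ℝ))]
  · refine ⟨-(⌊Real.sqrt c⌋), ⌊Real.sqrt c⌋, ?_⟩
    have hfl : (0:ℤ) ≤ ⌊Real.sqrt c⌋ := Int.floor_nonneg.2 (Real.sqrt_nonneg c)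
    have hDM : ⌊Real.sqrt c⌋ ≤ M := by
      have h1 : ⌊Real.sqrt c⌋ ≤ ⌊(M:ℝ)⌋ := Int.floor_le_floor hM
      simpa using h1
    ext b
    simp only [Finset.mem_filter, Finset.mem_Icc]
    constructor
    · rintro ⟨_, hb⟩
      have h1 : |(b:ℝ)| ≤ Real.sqrt c := by
        rw [← Real.sqrt_sq_eq_abs]; exact Real.sqrt_le_sqrt hb
      have h2 : b ≤ ⌊Real.sqrt c⌋ := Int.le_floor.2 ((le_abs_self _).trans h1)
      have h3 : (-b : ℤ) ≤ ⌊Real.sqrt c⌋ := by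
        refine Int.le_floor.2 ?_
        push_cast
        linarith [neg_abs_le ((b:ℝ))]
      exact ⟨by omega, h2⟩
    · rintro ⟨h1, h2⟩
      have hb' : |b| ≤ ⌊Real.sqrt c⌋ := by
        rw [abs_le]; exact ⟨by omega, h2⟩
      have h4 : |(b:ℝ)| ≤ Real.sqrt c := by
        calc |(b:ℝ)| = ((|b| : ℤ) : ℝ) := by rw [Int.cast_abs]
        _ ≤ ((⌊Real.sqrt c⌋ : ℤ) : ℝ) := by exact_mod_cast hb'
        _ ≤ Real.sqrt c := Int.floor_le _
      refine ⟨⟨by omega, by omega⟩, ?_⟩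
      nlinarith [Real.sq_sqrt hc, abs_nonneg ((b:ℝ)), _root_.sq_abs ((b:ℝ))]

lemma card_Icc_real (M : ℤ) (x : ℝ) (hx : 1 ≤ x) (hM1 : (1:ℤ) ≤ M) (hM2 : (M:ℝ) ≤ 2*x) :
    ((Finset.Icc (-M) M).card : ℝ) ≤ 5 * x := by
  have h2 : (Finset.Icc (-M) M).card = (2 * M + 1).toNat := by
    rw [Int.card_Icc]; congr 1; ring
  have h5 : ((2 * M + 1).toNat : ℤ) = 2 * M + 1 := Int.toNat_of_nonneg (by omega)
  have h4 : (((2 * M + 1).toNat : ℕ) : ℝ) = 2 * (M : ℝ) + 1 := by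
    exact_mod_cast congrArg (Int.cast : ℤ → ℝ) h5
  rw [h2, h4]
  linarith

open Classical in
lemma key_bound (u v xt x : ℝ) (hxt : 0 ≤ xt) (hx : 1 ≤ x) (hxx : xt ≤ x)
    (M : ℤ) (hM : x ≤ (M:ℝ)) (hM2 : (M:ℝ) ≤ 2 * x) :
    ‖∑ p ∈ (Finset.Icc (-M) M) ×ˢ (Finset.Icc (-M) M),
      if xt < Real.sqrt (((p.1:ℝ))^2 + ((p.2:ℝ))^2) ∧
          Real.sqrt (((p.1:ℝ))^2 + ((p.2:ℝ))^2) ≤ x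
      then Complex.exp (2*π*Complex.I*v) ^ p.1 * Complex.exp (2*π*Complex.I*u) ^ p.2
      else 0‖
    ≤ 50 * x * minInvDist u x := by
  have hM1 : (1:ℤ) ≤ M := by exact_mod_cast (by linarith : (1:ℝ) ≤ (M:ℝ))
  have hminnn : 0 ≤ minInvDist u x := minInvDist_nonneg u x (by linarith)
  rw [Finset.sum_product]
  have hcol : ∀ a ∈ Finset.Icc (-M) M,
      ‖∑ b ∈ Finset.Icc (-M) M,
        if xt < Real.sqrt (((a:ℝ))^2 + ((b:ℝ))^2) ∧
            Real.sqrt (((a:ℝ))^2 + ((b:ℝ))^2) ≤ x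
        then Complex.exp (2*π*Complex.I*v) ^ a * Complex.exp (2*π*Complex.I*u) ^ b
        else 0‖ ≤ 10 * minInvDist u x := by
    intro a _
    have hfac : (∑ b ∈ Finset.Icc (-M) M,
        if xt < Real.sqrt (((a:ℝ))^2 + ((b:ℝ))^2) ∧
            Real.sqrt (((a:ℝ))^2 + ((b:ℝ))^2) ≤ x
        then Complex.exp (2*π*Complex.I*v) ^ a * Complex.exp (2*π*Complex.I*u) ^ b
        else 0)
        = Complex.exp (2*π*Complex.I*v) ^ a * ∑ b ∈ Finset.Icc (-M) M,
          (if xt < Real.sqrt (((a:ℝ))^2 + ((b:ℝ))^2) ∧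
              Real.sqrt (((a:ℝ))^2 + ((b:ℝ))^2) ≤ x
          then Complex.exp (2*π*Complex.I*u) ^ b else 0) := by
      rw [Finset.mul_sum]
      refine Finset.sum_congr rfl fun b _ => ?_
      split_ifs with h
      · rfl
      · rw [mul_zero]
    rw [hfac, norm_mul, norm_zpow_exp, one_mul, ← Finset.sum_filter]
    have hsdiff : (Finset.Icc (-M) M).filter
        (fun b : ℤ => xt < Real.sqrt (((a:ℝ))^2 + ((b:ℝ))^2) ∧
            Real.sqrt (((a:ℝ))^2 + ((b:ℝ))^2) ≤ x)
        = ((Finset.Icc (-M) M).filter (fun b : ℤ => ((b:ℝ))^2 ≤ x^2 - (a:ℝ)^2)) \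
          ((Finset.Icc (-M) M).filter (fun b : ℤ => ((b:ℝ))^2 ≤ xt^2 - (a:ℝ)^2)) := by
      ext b
      simp only [Finset.mem_filter, Finset.mem_sdiff, not_and]
      have hs1 : Real.sqrt (((a:ℝ))^2 + ((b:ℝ))^2) ≤ x ↔ ((a:ℝ))^2 + ((b:ℝ))^2 ≤ x^2 :=
        Real.sqrt_le_left (by linarith)
      have hs2 : xt < Real.sqrt (((a:ℝ))^2 + ((b:ℝ))^2) ↔ xt^2 < ((a:ℝ))^2 + ((b:ℝ))^2 :=
        Real.lt_sqrt hxt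
      rw [hs1, hs2]
      constructor
      · rintro ⟨hmem, h1, h2⟩
        exact ⟨⟨hmem, by linarith⟩, fun _ => by nlinarith⟩
      · rintro ⟨⟨hmem, h1⟩, h2⟩
        have h3 := h2 hmem
        exact ⟨hmem, by nlinarith, by linarith⟩
    rw [hsdiff, Finset.sum_sdiff_eq_sub (Finset.monotone_filter_right _
      (fun b _ hb => by nlinarith))]
    have hsq1 : Real.sqrt (x^2 - (a:ℝ)^2) ≤ (M:ℝ) := by
      calc Real.sqrt (x^2 - (a:ℝ)^2) ≤ Real.sqrt (x^2) :=
        Real.sqrt_le_sqrt (by nlinarith [sq_nonneg ((a:ℝ))])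
      _ = x := Real.sqrt_sq (by linarith)
      _ ≤ (M:ℝ) := hM
    have hsq2 : Real.sqrt (xt^2 - (a:ℝ)^2) ≤ (M:ℝ) := by
      calc Real.sqrt (xt^2 - (a:ℝ)^2) ≤ Real.sqrt (x^2 - (a:ℝ)^2) :=
        Real.sqrt_le_sqrt (by nlinarith)
      _ ≤ (M:ℝ) := hsq1
    obtain ⟨m1, n1, h1⟩ := filter_sq_le M (x^2 - (a:ℝ)^2) hsq1
    obtain ⟨m2, n2, h2⟩ := filter_sq_le M (xt^2 - (a:ℝ)^2) hsq2
    have b1 := single_bound u x hx M hM1 hM2 _ (Finset.filter_subset _ _) m1 n1 h1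
    have b2 := single_bound u x hx M hM1 hM2 _ (Finset.filter_subset _ _) m2 n2 h2
    calc ‖_ - _‖ ≤ ‖_‖ + ‖_‖ := by
          simpa using norm_sub_le _ _
    _ ≤ 5 * minInvDist u x + 5 * minInvDist u x := add_le_add b1 b2
    _ = 10 * minInvDist u x := by ring
  calc ‖∑ a ∈ Finset.Icc (-M) M, _‖
      ≤ ∑ a ∈ Finset.Icc (-M) M, ‖_‖ := by
        simpa using norm_sum_le _ _
  _ ≤ ∑ a ∈ Finset.Icc (-M) M, 10 * minInvDist u x := Finset.sum_le_sum hcol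
  _ = ((Finset.Icc (-M) M).card : ℝ) * (10 * minInvDist u x) := by
        rw [Finset.sum_const, nsmul_eq_mul]
  _ ≤ (5 * x) * (10 * minInvDist u x) := by
        apply mul_le_mul_of_nonneg_right (card_Icc_real M x hx hM1 hM2) (by positivity)
  _ = 50 * x * minInvDist u x := by ring


open Classical in
theorem stmt_9 :
    ∃ C : ℝ, 0 < C ∧ ∀ κ : ℂ, ∀ xt x : ℝ, 0 < xt → xt < x →
      ‖(∑' n : {n : GaussianInt //
          xt < ‖(GaussianInt.toComplex n)‖ ∧
          ‖(GaussianInt.toComplex n)‖ ≤ x},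
        Complex.exp (2 * π * Complex.I * ((GaussianInt.toComplex n.1 * κ).im)))‖ ≤
      C * x * Real.sqrt (minInvDist κ.im x) * Real.sqrt (minInvDist κ.re x) := by
  refine ⟨50, by norm_num, ?_⟩
  intro κ xt x hxt hx
  have hx0 : 0 < x := hxt.trans hx
  have hRHS : 0 ≤ 50 * x * Real.sqrt (minInvDist κ.im x) * Real.sqrt (minInvDist κ.re x) := by
    positivity
  set u := κ.re with hu
  set v := κ.im with hv
  set P : GaussianInt → Prop := fun n =>
    xt < ‖GaussianInt.toComplex n‖ ∧ ‖GaussianInt.toComplex n‖ ≤ x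
    with hP
  set f : GaussianInt → ℂ := fun n =>
    Complex.exp (2 * π * Complex.I * ((GaussianInt.toComplex n * κ).im)) with hf
  have habs : ∀ n : GaussianInt,
      ‖GaussianInt.toComplex n‖ = Real.sqrt (((n.re:ℝ))^2 + ((n.im:ℝ))^2) := by
    intro n
    rw [Complex.norm_def, Complex.normSq_apply,
      GaussianInt.toComplex_def₂]; dsimp only
    ring_nf
  rcases lt_or_ge x 1 with hx1 | hx1
  · -- x < 1 : empty sum
    have hempty : ∀ n : GaussianInt, ¬ P n := by
      intro n ⟨h1, h2⟩
      by_cases hn0 : n = 0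
      · rw [hn0] at h1; simp at h1; linarith
      · have hsq : (1:ℝ) ≤ ((n.re:ℝ))^2 + ((n.im:ℝ))^2 := by
          have : n.re ≠ 0 ∨ n.im ≠ 0 := by
            by_contra hcon
            push_neg at hcon
            exact hn0 (Zsqrtd.ext hcon.1 hcon.2)
          rcases this with h | h
          · have : (1:ℤ) ≤ n.re^2 := by
              rcases lt_or_gt_of_ne h with h'|h' <;> nlinarith
            have h1' : (1:ℝ) ≤ ((n.re:ℝ))^2 := by exact_mod_cast this
            nlinarith [sq_nonneg ((n.im:ℝ))]
          · have : (1:ℤ) ≤ n.im^2 := by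
              rcases lt_or_gt_of_ne h with h'|h' <;> nlinarith
            have h1' : (1:ℝ) ≤ ((n.im:ℝ))^2 := by exact_mod_cast this
            nlinarith [sq_nonneg ((n.re:ℝ))]
        have : (1:ℝ) ≤ ‖GaussianInt.toComplex n‖ := by
          rw [habs n]
          calc (1:ℝ) = Real.sqrt 1 := Real.sqrt_one.symm
          _ ≤ _ := Real.sqrt_le_sqrt hsq
        linarith
    rw [tsum_eq_sum (s := (∅ : Finset {n : GaussianInt // P n}))
      (fun b _ => (hempty b.1 b.2).elim), Finset.sum_empty, norm_zero]
    exact hRHS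
  · -- main case
    set M : ℤ := ⌈x⌉ with hMdef
    have hM : x ≤ (M:ℝ) := Int.le_ceil x
    have hM2 : (M:ℝ) ≤ 2 * x := by
      have := Int.ceil_lt_add_one x
      rw [← hMdef] at this
      linarith
    set box : Finset (ℤ × ℤ) := (Finset.Icc (-M) M) ×ˢ (Finset.Icc (-M) M) with hbox
    set ι : ℤ × ℤ → GaussianInt := fun p => (⟨p.1, p.2⟩ : GaussianInt) with hι
    set F : Finset GaussianInt := box.image ι with hF
    have hmemF : ∀ n : GaussianInt, P n → n ∈ F := by
      intro n hn
      have h2 := hn.2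
      rw [habs n] at h2
      have hre : |(n.re:ℝ)| ≤ x := by
        rw [← Real.sqrt_sq_eq_abs]
        calc Real.sqrt (((n.re:ℝ))^2) ≤ Real.sqrt (((n.re:ℝ))^2 + ((n.im:ℝ))^2) :=
          Real.sqrt_le_sqrt (by nlinarith [sq_nonneg ((n.im:ℝ))])
        _ ≤ x := h2
      have him : |(n.im:ℝ)| ≤ x := by
        rw [← Real.sqrt_sq_eq_abs]
        calc Real.sqrt (((n.im:ℝ))^2) ≤ Real.sqrt (((n.re:ℝ))^2 + ((n.im:ℝ))^2) :=
          Real.sqrt_le_sqrt (by nlinarith [sq_nonneg ((n.re:ℝ))])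
        _ ≤ x := h2
      have hre' : -M ≤ n.re ∧ n.re ≤ M := by
        rw [abs_le] at hre
        constructor
        · exact_mod_cast (by push_cast; linarith : ((-M:ℤ):ℝ) ≤ (n.re:ℝ))
        · exact_mod_cast (by linarith : ((n.re:ℤ):ℝ) ≤ ((M:ℤ):ℝ))
      have him' : -M ≤ n.im ∧ n.im ≤ M := by
        rw [abs_le] at him
        constructor
        · exact_mod_cast (by push_cast; linarith : ((-M:ℤ):ℝ) ≤ (n.im:ℝ))
        · exact_mod_cast (by linarith : ((n.im:ℤ):ℝ) ≤ ((M:ℤ):ℝ))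
      refine Finset.mem_image.2 ⟨(n.re, n.im), ?_, rfl⟩
      rw [hbox, Finset.mem_product]
      exact ⟨Finset.mem_Icc.2 hre', Finset.mem_Icc.2 him'⟩
    have hinj : ∀ p ∈ box, ∀ q ∈ box, ι p = ι q → p = q := by
      intro p _ q _ hpq
      have h1 : (ι p).re = (ι q).re := by rw [hpq]
      have h2 : (ι p).im = (ι q).im := by rw [hpq]
      exact Prod.ext h1 h2
    -- the tsum equals the box sum
    have hsum : (∑' n : {n : GaussianInt // P n}, f n.1)
        = ∑ p ∈ box, if xt < Real.sqrt (((p.1:ℝ))^2 + ((p.2:ℝ))^2) ∧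
              Real.sqrt (((p.1:ℝ))^2 + ((p.2:ℝ))^2) ≤ x
            then Complex.exp (2*π*Complex.I*v) ^ p.1 * Complex.exp (2*π*Complex.I*u) ^ p.2
            else 0 := by
      have h1 : (∑' n : {n : GaussianInt // P n}, f n.1)
          = ∑' n : GaussianInt, Set.indicator {n | P n} f n := tsum_subtype {n | P n} f
      have hzero : ∀ n ∉ F, Set.indicator {n : GaussianInt | P n} f n = 0 := by
        intro n hn
        exact Set.indicator_of_notMem (s := {n : GaussianInt | P n}) (f := f)
          (fun hPn => hn (hmemF n hPn))
      rw [h1, tsum_eq_sum (s := F) hzero]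
      rw [hF, Finset.sum_image hinj]
      refine Finset.sum_congr rfl fun p hp => ?_
      have hcond : P (ι p) ↔ (xt < Real.sqrt (((p.1:ℝ))^2 + ((p.2:ℝ))^2) ∧
          Real.sqrt (((p.1:ℝ))^2 + ((p.2:ℝ))^2) ≤ x) := by
        have habs' : ‖GaussianInt.toComplex (ι p)‖
            = Real.sqrt (((p.1:ℝ))^2 + ((p.2:ℝ))^2) := habs (ι p)
        rw [hP]
        show (xt < ‖GaussianInt.toComplex (ι p)‖ ∧
            ‖GaussianInt.toComplex (ι p)‖ ≤ x) ↔ _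
        rw [habs']
      have hfval : f (ι p) = Complex.exp (2*π*Complex.I*v) ^ p.1
          * Complex.exp (2*π*Complex.I*u) ^ p.2 := by
        rw [hf]
        show Complex.exp (2 * π * Complex.I * (((GaussianInt.toComplex (ι p)) * κ).im : ℝ)) = _
        have him : ((GaussianInt.toComplex (ι p)) * κ).im
            = (p.1:ℝ) * v + (p.2:ℝ) * u := by
          simp only [Complex.mul_im, GaussianInt.toComplex_def₂, hι, hu, hv]
        rw [him, show (2 * (π:ℂ) * Complex.I * (((p.1:ℝ) * v + (p.2:ℝ) * u : ℝ) : ℂ))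
            = (p.1 : ℤ) * (2 * (π:ℂ) * Complex.I * (v:ℂ))
              + (p.2 : ℤ) * (2 * (π:ℂ) * Complex.I * (u:ℂ)) by push_cast; ring,
          Complex.exp_add, Complex.exp_int_mul, Complex.exp_int_mul]
      rw [Set.indicator_apply]
      simp only [Set.mem_setOf_eq]
      by_cases hPp : P (ι p)
      · rw [if_pos hPp, if_pos (hcond.1 hPp), hfval]
      · rw [if_neg hPp, if_neg (fun hc => hPp (hcond.2 hc))]
    -- bounds
    have hb1 := key_bound u v xt x hxt.le hx1 hx.le M hM hM2
    have hswap : (∑ p ∈ box, if xt < Real.sqrt (((p.1:ℝ))^2 + ((p.2:ℝ))^2) ∧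
              Real.sqrt (((p.1:ℝ))^2 + ((p.2:ℝ))^2) ≤ x
            then Complex.exp (2*π*Complex.I*v) ^ p.1 * Complex.exp (2*π*Complex.I*u) ^ p.2
            else 0)
        = ∑ p ∈ box, if xt < Real.sqrt (((p.1:ℝ))^2 + ((p.2:ℝ))^2) ∧
              Real.sqrt (((p.1:ℝ))^2 + ((p.2:ℝ))^2) ≤ x
            then Complex.exp (2*π*Complex.I*u) ^ p.1 * Complex.exp (2*π*Complex.I*v) ^ p.2
            else 0 := by
      refine Finset.sum_equiv (Equiv.prodComm ℤ ℤ) ?_ ?_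
      · intro p
        rw [hbox]
        simp only [Finset.mem_product, Equiv.prodComm_apply, Prod.fst_swap, Prod.snd_swap]
        tauto
      · intro p _
        simp only [Equiv.prodComm_apply, Prod.fst_swap, Prod.snd_swap]
        simp only [show ((p.2:ℝ))^2 + ((p.1:ℝ))^2 = ((p.1:ℝ))^2 + ((p.2:ℝ))^2 by ring]
        split_ifs with h
        · ring
        · rfl
    have hb2 := key_bound v u xt x hxt.le hx1 hx.le M hM hM2
    rw [← hswap] at hb2
    rw [hsum]
    have hmin : ‖∑ p ∈ box, if xt < Real.sqrt (((p.1:ℝ))^2 + ((p.2:ℝ))^2) ∧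
              Real.sqrt (((p.1:ℝ))^2 + ((p.2:ℝ))^2) ≤ x
            then Complex.exp (2*π*Complex.I*v) ^ p.1 * Complex.exp (2*π*Complex.I*u) ^ p.2
            else 0‖
        ≤ 50 * x * min (minInvDist u x) (minInvDist v x) := by
      rcases min_cases (minInvDist u x) (minInvDist v x) with ⟨heq, _⟩ | ⟨heq, _⟩
      · rw [heq]; exact hb1
      · rw [heq]; exact hb2
    refine hmin.trans ?_
    have : min (minInvDist u x) (minInvDist v x)
        ≤ Real.sqrt (minInvDist v x) * Real.sqrt (minInvDist u x) := by
      rw [min_comm]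
      exact min_le_sqrt_mul_sqrt (minInvDist_nonneg v x hx0.le) (minInvDist_nonneg u x hx0.le)
    calc 50 * x * min (minInvDist u x) (minInvDist v x)
        ≤ 50 * x * (Real.sqrt (minInvDist v x) * Real.sqrt (minInvDist u x)) := by
          apply mul_le_mul_of_nonneg_left this (by positivity)
    _ = 50 * x * Real.sqrt (minInvDist v x) * Real.sqrt (minInvDist u x) := by ring
end
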